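/- arXiv:math/0512029 — 4 statements merged into one kernel-verified Lean document; each statement's English description precedes it below -/
import Mathlib

section
/- Let p ≥ 0 and let (a_n)_{n≥0} be complex numbers such that the sequence f_n = n^p a_n (n = 0,1,2,…) satisfies the Hausdorff condition. Then the power series Σ_{n=0}^∞ a_n z^n converges for every complex z with |z| < 1, uniformly on compact subsets of the open unit disk, and the function f(z) = (1/(2π)) Σ_{n=0}^∞ a_n z^n is holomorphic on the open unit disk D_0 = {z ∈ ℂ : |z| < 1}. -/
open MeasureTheory Filter Finset Complex

/-- Finite-difference operator: `Δ^k f_j = ∑_{m=0}^k (-1)^m C(k,m) f_{j+k-m}`. -/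
noncomputable def fdiff (f : ℕ → ℂ) (k j : ℕ) : ℂ :=
  ∑ m ∈ Finset.range (k + 1), (-1 : ℂ) ^ m * (k.choose m : ℂ) * f (j + k - m)

/-- Hausdorff condition on a sequence of complex numbers. -/
def HausdorffCond (f : ℕ → ℂ) : Prop :=
  ∃ M : ℝ, 0 < M ∧ ∃ ε : ℝ, 0 < ε ∧ ∀ n : ℕ,
    ((n : ℝ) + 1) ^ ((1 : ℝ) + ε) *
      ∑ i ∈ Finset.range (n + 1),
        ((n.choose i : ℝ)) ^ ((2 : ℝ) + ε) * ‖fdiff f i (n - i)‖ ^ ((2 : ℝ) + ε) < M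

/-- Pollaczek polynomials `P_0 = 1`, `P_1 = 2x`, `(m+1)P_{m+1} = 2x P_m - m P_{m-1}`. -/
noncomputable def pollaczek : ℕ → ℂ → ℂ
  | 0, _ => 1
  | 1, x => 2 * x
  | (m + 2), x => (2 * x * pollaczek (m + 1) x - ((m : ℂ) + 1) * pollaczek m x) / ((m : ℂ) + 2)

/-- Laguerre polynomials `L_0 = 1`, `L_1 = 1 - x`, `(m+1)L_{m+1} = (2m+1-x)L_m - m L_{m-1}`. -/
noncomputable def laguerre : ℕ → ℝ → ℝ
  | 0, _ => 1
  | 1, x => 1 - x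
  | (m + 2), x =>
      ((2 * ((m : ℝ) + 1) + 1 - x) * laguerre (m + 1) x - ((m : ℝ) + 1) * laguerre m x) /
        ((m : ℝ) + 2)

/-- Basis functions `φ_m(x) = √2 ⬝ i^m ⬝ L_m(2/x) ⬝ e^{-1/x} / x`. -/
noncomputable def phi (m : ℕ) (x : ℝ) : ℂ :=
  (Real.sqrt 2 : ℂ) * Complex.I ^ m * (laguerre m (2 / x) : ℂ) * (Real.exp (-(1 / x)) : ℂ) / (x : ℂ)

/-- Exact expansion coefficients `c_m = √2 ∑_{n=0}^∞ ((-1)^n/n!) a_n P_m(-i(n+1/2))`. -/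
noncomputable def cCoef (a : ℕ → ℂ) (m : ℕ) : ℂ :=
  (Real.sqrt 2 : ℂ) *
    ∑' n : ℕ, ((-1 : ℂ) ^ n / (n.factorial : ℂ)) * a n *
      pollaczek m (-Complex.I * ((n : ℂ) + 1 / 2))

/-- Truncated noisy coefficients `c_m^{(ε,N)} = √2 ∑_{n=0}^N ((-1)^n/n!) a_n^{(ε)} P_m(-i(n+1/2))`. -/
noncomputable def cNoisy (a : ℕ → ℂ) (N m : ℕ) : ℂ :=
  (Real.sqrt 2 : ℂ) *
    ∑ n ∈ Finset.range (N + 1), ((-1 : ℂ) ^ n / (n.factorial : ℂ)) * a n *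
      pollaczek m (-Complex.I * ((n : ℂ) + 1 / 2))

/-- The weight function `w(x) = (1/π) Γ(1/2 + ix) Γ(1/2 - ix)`. -/
noncomputable def wPol (x : ℝ) : ℂ :=
  (1 / (Real.pi : ℂ)) * Complex.Gamma (1 / 2 + Complex.I * x) * Complex.Gamma (1 / 2 - Complex.I * x)

/-- Pochhammer symbol `(a)_k = a (a+1) ⋯ (a+k-1)`. -/
noncomputable def poch (a : ℂ) (k : ℕ) : ℂ :=
  ∏ j ∈ Finset.range k, (a + (j : ℂ))

lemma haus_bound {f : ℕ → ℂ} (hf : HausdorffCond f) : ∃ C : ℝ, 0 ≤ C ∧ ∀ n, ‖f n‖ ≤ C := by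
  obtain ⟨M, hM, ε, hε, h⟩ := hf
  refine ⟨M ^ ((2 + ε)⁻¹), Real.rpow_nonneg hM.le _, fun n => ?_⟩
  have hq : (0:ℝ) < 2 + ε := by linarith
  have h1 : ‖f n‖ ^ ((2:ℝ) + ε) ≤
      ∑ i ∈ Finset.range (n + 1),
        ((n.choose i : ℝ)) ^ ((2 : ℝ) + ε) * ‖fdiff f i (n - i)‖ ^ ((2 : ℝ) + ε) := by
    have h0 : ((n.choose 0 : ℝ)) ^ ((2 : ℝ) + ε) * ‖fdiff f 0 (n - 0)‖ ^ ((2 : ℝ) + ε)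
        = ‖f n‖ ^ ((2:ℝ) + ε) := by
      simp [fdiff]
    calc ‖f n‖ ^ ((2:ℝ) + ε) = _ := h0.symm
      _ ≤ _ := Finset.single_le_sum (f := fun i => ((n.choose i : ℝ)) ^ ((2 : ℝ) + ε) * ‖fdiff f i (n - i)‖ ^ ((2 : ℝ) + ε))
          (fun i _ => mul_nonneg (Real.rpow_nonneg (by positivity) _) (Real.rpow_nonneg (norm_nonneg _) _))
          (Finset.mem_range.2 (Nat.succ_pos n))
  have h2 : ∑ i ∈ Finset.range (n + 1),
        ((n.choose i : ℝ)) ^ ((2 : ℝ) + ε) * ‖fdiff f i (n - i)‖ ^ ((2 : ℝ) + ε) ≤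
      ((n : ℝ) + 1) ^ ((1 : ℝ) + ε) * ∑ i ∈ Finset.range (n + 1),
        ((n.choose i : ℝ)) ^ ((2 : ℝ) + ε) * ‖fdiff f i (n - i)‖ ^ ((2 : ℝ) + ε) := by
    have : (1:ℝ) ≤ ((n : ℝ) + 1) ^ ((1 : ℝ) + ε) :=
      Real.one_le_rpow (by exact_mod_cast Nat.le_add_left 1 n) (by linarith)
    nlinarith [Finset.sum_nonneg (fun i (_ : i ∈ Finset.range (n+1)) =>
      mul_nonneg (Real.rpow_nonneg (by positivity : (0:ℝ) ≤ (n.choose i : ℝ)) ((2 : ℝ) + ε))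
        (Real.rpow_nonneg (norm_nonneg (fdiff f i (n - i))) ((2 : ℝ) + ε)))]
  have h3 : ‖f n‖ ^ ((2:ℝ) + ε) ≤ M := le_of_lt (lt_of_le_of_lt (h1.trans h2) (h n))
  calc ‖f n‖ = (‖f n‖ ^ ((2:ℝ)+ε)) ^ ((2+ε)⁻¹) := by
        rw [← Real.rpow_mul (norm_nonneg _), mul_inv_cancel₀ hq.ne', Real.rpow_one]
    _ ≤ M ^ ((2+ε)⁻¹) := Real.rpow_le_rpow (Real.rpow_nonneg (norm_nonneg _) _) h3 (by positivity)

/-- If f_n = n^p a_n satisfies the Hausdorff condition (p ≥ 0), then the power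
series Σ a_n z^n converges on the open unit disk, uniformly on compact subsets, and
f(z) = (1/(2π)) Σ a_n z^n is holomorphic there. -/
theorem statement0 (p : ℝ) (hp : 0 ≤ p) (a : ℕ → ℂ)
    (ha : HausdorffCond (fun n => ((((n : ℝ) ^ p : ℝ)) : ℂ) * a n)) :
    (∀ z : ℂ, ‖z‖ < 1 → Summable fun n : ℕ => a n * z ^ n) ∧
    (∀ K : Set ℂ, K ⊆ Metric.ball (0 : ℂ) 1 → IsCompact K →
      TendstoUniformlyOn
        (fun (N : ℕ) (z : ℂ) => (1 / (2 * (Real.pi : ℂ))) * ∑ n ∈ Finset.range N, a n * z ^ n)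
        (fun z : ℂ => (1 / (2 * (Real.pi : ℂ))) * ∑' n : ℕ, a n * z ^ n) Filter.atTop K) ∧
    DifferentiableOn ℂ (fun z : ℂ => (1 / (2 * (Real.pi : ℂ))) * ∑' n : ℕ, a n * z ^ n)
      (Metric.ball (0 : ℂ) 1) := by
  obtain ⟨C, hC0, hC⟩ := haus_bound ha
  -- uniform bound on a
  set B : ℝ := max C ‖a 0‖ with hBdef
  have hB0 : 0 ≤ B := le_trans hC0 (le_max_left _ _)
  have hB : ∀ n, ‖a n‖ ≤ B := by
    intro n
    rcases Nat.eq_zero_or_pos n with rfl | hn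
    · exact le_max_right _ _
    · have h1 : (1:ℝ) ≤ (n:ℝ) ^ p := Real.one_le_rpow (by exact_mod_cast hn) hp
      have := hC n
      simp only [norm_mul, Complex.norm_real] at this
      have : (n:ℝ) ^ p * ‖a n‖ ≤ C := by
        rwa [Real.norm_of_nonneg (Real.rpow_nonneg (Nat.cast_nonneg n) p)] at this
      refine le_trans (le_trans ?_ this) (le_max_left _ _)
      nlinarith [norm_nonneg (a n)]
  -- summability
  have hsum : ∀ z : ℂ, ‖z‖ < 1 → Summable fun n : ℕ => a n * z ^ n := by
    intro z hz
    refine Summable.of_norm_bounded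
      ((summable_geometric_of_lt_one (norm_nonneg z) hz).mul_left B) (fun n => ?_)
    rw [norm_mul, norm_pow]
    exact mul_le_mul_of_nonneg_right (hB n) (by positivity)
  refine ⟨hsum, ?_, ?_⟩
  · -- uniform convergence on compacts
    intro K hKsub hK
    rcases K.eq_empty_or_nonempty with rfl | hne
    · simp [TendstoUniformlyOn]
    obtain ⟨z₀, hz₀K, hz₀⟩ := hK.exists_isMaxOn hne (continuous_norm.continuousOn (s := K))
    have hr : ‖z₀‖ < 1 := by simpa using hKsub hz₀K
    have key := tendstoUniformlyOn_tsum_nat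
      (u := fun n => ‖(1 / (2 * (Real.pi : ℂ)))‖ * (B * ‖z₀‖ ^ n))
      (f := fun n z => (1 / (2 * (Real.pi : ℂ))) * (a n * z ^ n))
      (((summable_geometric_of_lt_one (norm_nonneg z₀) hr).mul_left B).mul_left _)
      (s := K) (fun n z hz => by
        rw [norm_mul]
        refine mul_le_mul_of_nonneg_left ?_ (norm_nonneg _)
        rw [norm_mul, norm_pow]
        exact mul_le_mul (hB n) (pow_le_pow_left₀ (norm_nonneg z) (hz₀ hz) n)
          (by positivity) hB0)
    have heq : ∀ z : ℂ, z ∈ K → (∑' n : ℕ, (1 / (2 * (Real.pi : ℂ))) * (a n * z ^ n))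
        = (1 / (2 * (Real.pi : ℂ))) * ∑' n : ℕ, a n * z ^ n := fun z _ => tsum_mul_left
    refine (key.congr ?_).congr_right heq
    filter_upwards with N z hz
    simp [Finset.mul_sum]
  · -- differentiability
    set q := FormalMultilinearSeries.ofScalars ℂ a with hq
    have hrad : 1 ≤ q.radius := by
      refine ENNReal.le_of_forall_nnreal_lt (fun r hr => ?_)
      refine q.le_radius_of_bound B (fun n => ?_)
      have hr1 : (r : ℝ) < 1 := by exact_mod_cast hr
      have h1 : ‖q n‖ ≤ ‖a n‖ := (FormalMultilinearSeries.ofScalars_norm ℂ a n).le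
      calc ‖q n‖ * (r:ℝ) ^ n ≤ ‖a n‖ * 1 := by
            refine mul_le_mul h1 ?_ (by positivity) (norm_nonneg _)
            exact pow_le_one₀ r.coe_nonneg hr1.le
        _ ≤ B := by rw [mul_one]; exact hB n
    have hball : HasFPowerSeriesOnBall q.sum q 0 q.radius :=
      q.hasFPowerSeriesOnBall (lt_of_lt_of_le one_pos hrad)
    have hsub : Metric.ball (0:ℂ) 1 ⊆ EMetric.ball (0:ℂ) q.radius := by
      intro z hz
      change edist z 0 < q.radius
      rw [edist_zero_right]
      change ((‖z‖₊ : NNReal) : ENNReal) < q.radius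
      refine lt_of_lt_of_le ?_ hrad
      rw [← ENNReal.coe_one, ENNReal.coe_lt_coe, ← NNReal.coe_lt_coe]
      simpa using hz
    have hd : DifferentiableOn ℂ q.sum (Metric.ball (0:ℂ) 1) :=
      (hball.differentiableOn).mono hsub
    refine ((hd.const_mul (1 / (2 * (Real.pi : ℂ))))).congr (fun z hz => ?_)
    congr 1
    rw [FormalMultilinearSeries.sum]
    congr 1
    ext n
    rw [FormalMultilinearSeries.ofScalars_apply_eq]
    simp [smul_eq_mul, mul_comm]
end

section
/- Let N ∈ ℕ and let a_0^{(ε)}, …, a_N^{(ε)} be complex numbers with a_N^{(ε)} ≠ 0, and set c_m^{(ε,N)} = √2 Σ_{n=0}^{N} ((−1)^n / n!) a_n^{(ε)} P_m(−i(n+1/2)) for m ≥ 0. Then lim_{m→∞} |c_m^{(ε,N)}| · (N!)² / (√2 · |a_N^{(ε)}| · (2m)^N) = 1, i.e., |c_m^{(ε,N)}| is asymptotic to (√2 |a_N^{(ε)}| / (N!)²) (2m)^N as m → ∞. -/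
open MeasureTheory Filter Finset Complex

/-- Delannoy-type numbers: `snat n m = ∑_k C(n,k) C(m,k) 2^k`. -/
def snat (n m : ℕ) : ℕ := ∑ k ∈ Finset.range (n + 1), n.choose k * m.choose k * 2 ^ k

lemma cast_choose_succ_right {K : Type*} [Field K] [CharZero K] (n k : ℕ) :
    (n.choose (k + 1) : K) * ((k : K) + 1) = (n.choose k : K) * ((n : K) - (k : K)) := by
  rcases le_or_gt k n with h | h
  · have h1 := Nat.choose_succ_right_eq n k
    have h2 : ((n - k : ℕ) : K) = (n : K) - (k : K) := by
      push_cast [h]; ring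
    calc (n.choose (k + 1) : K) * ((k : K) + 1)
        = ((n.choose (k + 1) * (k + 1) : ℕ) : K) := by push_cast; ring
      _ = ((n.choose k * (n - k) : ℕ) : K) := by rw [h1]
      _ = (n.choose k : K) * ((n : K) - (k : K)) := by rw [Nat.cast_mul, h2]
  · rw [Nat.choose_eq_zero_of_lt (by omega), Nat.choose_eq_zero_of_lt h]
    simp

lemma cast_choose_mul_succ {K : Type*} [Field K] [CharZero K] (m k : ℕ) :
    (m.choose k : K) * ((m : K) + 1) = ((m + 1).choose k : K) * ((m : K) + 1 - (k : K)) := by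
  rcases le_or_gt k (m + 1) with h | h
  · have h1 := Nat.choose_mul_succ_eq m k
    have h2 : ((m + 1 - k : ℕ) : K) = (m : K) + 1 - (k : K) := by
      push_cast [h]; ring
    calc (m.choose k : K) * ((m : K) + 1)
        = ((m.choose k * (m + 1) : ℕ) : K) := by push_cast; ring
      _ = (((m + 1).choose k * (m + 1 - k) : ℕ) : K) := by rw [h1]
      _ = ((m + 1).choose k : K) * ((m : K) + 1 - (k : K)) := by rw [Nat.cast_mul, h2]
  · rw [Nat.choose_eq_zero_of_lt (by omega), Nat.choose_eq_zero_of_lt h]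
    simp

lemma snat_rec (n m : ℕ) :
    ((m : ℂ) + 2) * (snat n (m + 2) : ℂ)
      = (2 * (n : ℂ) + 1) * (snat n (m + 1) : ℂ) + ((m : ℂ) + 1) * (snat n m : ℂ) := by
  set F : ℕ → ℂ := fun k =>
    (k : ℂ) * 2 ^ k * (n.choose k : ℂ) * ((m + 1).choose (k - 1) : ℂ) with hF
  have key : ∀ k : ℕ,
      (n.choose k : ℂ) * 2 ^ k *
          (((m : ℂ) + 2) * ((m + 2).choose k : ℂ) - (2 * (n : ℂ) + 1) * ((m + 1).choose k : ℂ)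
            - ((m : ℂ) + 1) * (m.choose k : ℂ))
        = -(F (k + 1) - F k) := by
    intro k
    match k with
    | 0 => simp [hF, Nat.choose_one_right]; ring
    | (j + 1) =>
      have hj1 : ((j : ℂ) + 1) ≠ 0 := by
        have : ((j + 1 : ℕ) : ℂ) ≠ 0 := Nat.cast_ne_zero.mpr (by omega)
        push_cast at this; exact this
      have hj2 : ((j : ℂ) + 2) ≠ 0 := by
        have : ((j + 2 : ℕ) : ℂ) ≠ 0 := Nat.cast_ne_zero.mpr (by omega)
        push_cast at this; exact this
      have hm1 : ((m : ℂ) + 1) ≠ 0 := by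
        have : ((m + 1 : ℕ) : ℂ) ≠ 0 := Nat.cast_ne_zero.mpr (by omega)
        push_cast at this; exact this
      have pascal : ((m + 2).choose (j + 1) : ℂ)
          = ((m + 1).choose j : ℂ) + ((m + 1).choose (j + 1) : ℂ) := by
        rw [show m + 2 = (m + 1) + 1 from rfl, Nat.choose_succ_succ']
        push_cast; ring
      have p1 : ((m + 1).choose (j + 1) : ℂ) * ((j : ℂ) + 1)
          = ((m + 1).choose j : ℂ) * (((m + 1 : ℕ) : ℂ) - (j : ℂ)) :=
        cast_choose_succ_right (m + 1) j
      have p2 : (m.choose (j + 1) : ℂ) * ((m : ℂ) + 1)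
          = ((m + 1).choose (j + 1) : ℂ) * ((m : ℂ) + 1 - ((j + 1 : ℕ) : ℂ)) :=
        cast_choose_mul_succ m (j + 1)
      have p3 : (n.choose (j + 1 + 1) : ℂ) * (((j + 1 : ℕ) : ℂ) + 1)
          = (n.choose (j + 1) : ℂ) * ((n : ℂ) - ((j + 1 : ℕ) : ℂ)) :=
        cast_choose_succ_right n (j + 1)
      push_cast at p1 p2 p3
      have hY : ((m + 1).choose (j + 1) : ℂ)
          = ((m + 1).choose j : ℂ) * ((m : ℂ) + 1 - (j : ℂ)) / ((j : ℂ) + 1) := by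
        field_simp
        linear_combination p1
      have hZ : (m.choose (j + 1) : ℂ)
          = ((m + 1).choose (j + 1) : ℂ) * ((m : ℂ) - (j : ℂ)) / ((m : ℂ) + 1) := by
        field_simp
        linear_combination p2
      have hB : (n.choose (j + 2) : ℂ)
          = (n.choose (j + 1) : ℂ) * ((n : ℂ) - (j : ℂ) - 1) / ((j : ℂ) + 2) := by
        field_simp
        linear_combination p3
      simp only [hF]
      rw [show (j + 1 + 1 : ℕ) - 1 = j + 1 from rfl, show (j + 1 : ℕ) - 1 = j from rfl]
      rw [pascal, hZ, hY, hB]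
      push_cast
      field_simp
      ring
  have tele : ∑ k ∈ Finset.range (n + 1), (F (k + 1) - F k) = F (n + 1) - F 0 :=
    Finset.sum_range_sub F (n + 1)
  have hFn : F (n + 1) = 0 := by
    simp [hF, Nat.choose_succ_self]
  have hF0 : F 0 = 0 := by simp [hF]
  have main : ((m : ℂ) + 2) * (snat n (m + 2) : ℂ) - (2 * (n : ℂ) + 1) * (snat n (m + 1) : ℂ)
      - ((m : ℂ) + 1) * (snat n m : ℂ) = ∑ k ∈ Finset.range (n + 1), -(F (k + 1) - F k) := by
    simp only [snat]
    push_cast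
    rw [Finset.mul_sum, Finset.mul_sum, Finset.mul_sum, ← Finset.sum_sub_distrib,
      ← Finset.sum_sub_distrib]
    refine Finset.sum_congr rfl fun k _ => ?_
    rw [← key k]
    ring
  rw [Finset.sum_neg_distrib, tele, hFn, hF0] at main
  linear_combination main

lemma snat_zero (n : ℕ) : snat n 0 = 1 := by
  unfold snat
  rw [Finset.sum_eq_single 0]
  · simp
  · intro k _ hk
    rcases Nat.exists_eq_succ_of_ne_zero hk with ⟨j, rfl⟩
    simp [Nat.choose_eq_zero_of_lt]
  · simp

lemma snat_one (n : ℕ) : snat n 1 = 2 * n + 1 := by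
  rcases Nat.eq_zero_or_pos n with rfl | hn
  · rfl
  · unfold snat
    rw [← Finset.sum_subset (show Finset.range 2 ⊆ Finset.range (n + 1) by
      intro k hk; simp at hk ⊢; omega)]
    · simp [Finset.sum_range_succ, Nat.choose_one_right]
      ring
    · intro k _ hk2
      simp at hk2
      simp [Nat.choose_eq_zero_of_lt (show 1 < k by omega)]

lemma pollaczek_eq : ∀ (m n : ℕ),
    pollaczek m (-Complex.I * ((n : ℂ) + 1 / 2)) = (-Complex.I) ^ m * (snat n m : ℂ)
  | 0, n => by simp [pollaczek, snat_zero]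
  | 1, n => by
    simp only [pollaczek, snat_one, pow_one]
    push_cast
    ring
  | (m + 2), n => by
    have h1 := pollaczek_eq (m + 1) n
    have h0 := pollaczek_eq m n
    have hs := snat_rec n m
    have hne : ((m : ℂ) + 2) ≠ 0 := by
      have : ((m + 2 : ℕ) : ℂ) ≠ 0 := Nat.cast_ne_zero.mpr (by omega)
      push_cast at this; exact this
    show (2 * (-Complex.I * ((n : ℂ) + 1 / 2)) * pollaczek (m + 1) (-Complex.I * ((n : ℂ) + 1 / 2))
        - ((m : ℂ) + 1) * pollaczek m (-Complex.I * ((n : ℂ) + 1 / 2))) / ((m : ℂ) + 2)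
      = (-Complex.I) ^ (m + 2) * (snat n (m + 2) : ℂ)
    rw [h1, h0, div_eq_iff hne]
    linear_combination (-Complex.I) ^ m * hs +
      ((-Complex.I) ^ m * (2 * ((n : ℂ) + 1 / 2) * (snat n (m + 1) : ℂ)
        - ((m : ℂ) + 2) * (snat n (m + 2) : ℂ))) * Complex.I_sq

lemma choose_div_pow_tendsto (k : ℕ) :
    Tendsto (fun m : ℕ => (m.choose k : ℝ) / (m : ℝ) ^ k) atTop
      (nhds (1 / (k.factorial : ℝ))) := by
  have hprod : Tendsto (fun m : ℕ => (1 / (k.factorial : ℝ)) *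
      ∏ j ∈ Finset.range k, (1 - (j : ℝ) / (m : ℝ))) atTop
      (nhds (1 / (k.factorial : ℝ))) := by
    have h1 : Tendsto (fun m : ℕ => ∏ j ∈ Finset.range k, (1 - (j : ℝ) / (m : ℝ))) atTop
        (nhds (∏ _j ∈ Finset.range k, (1 : ℝ))) := by
      refine tendsto_finset_prod _ fun j _ => ?_
      have h2 : Tendsto (fun m : ℕ => (j : ℝ) / (m : ℝ)) atTop (nhds 0) :=
        tendsto_const_div_atTop_nhds_zero_nat _
      simpa using (tendsto_const_nhds (x := (1 : ℝ))).sub h2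
    simp only [Finset.prod_const_one] at h1
    simpa using (h1.const_mul (1 / (k.factorial : ℝ)))
  refine Tendsto.congr' ?_ hprod
  filter_upwards [eventually_ge_atTop (max k 1)] with m hm
  have hkm : k ≤ m := le_trans (le_max_left _ _) hm
  have hm1 : 1 ≤ m := le_trans (le_max_right _ _) hm
  have hm0 : (m : ℝ) ≠ 0 := Nat.cast_ne_zero.mpr (by omega)
  have hcast : (m.choose k : ℝ) * (k.factorial : ℝ) = ∏ j ∈ Finset.range k, ((m : ℝ) - j) := by
    have h1 : ((m.descFactorial k : ℕ) : ℝ) = ∏ j ∈ Finset.range k, ((m : ℝ) - j) := by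
      rw [Nat.descFactorial_eq_prod_range, Nat.cast_prod]
      refine Finset.prod_congr rfl fun j hj => ?_
      have hj' : j ≤ m := le_trans (le_of_lt (Finset.mem_range.mp hj)) hkm
      rw [Nat.cast_sub hj']
    rw [← h1, Nat.descFactorial_eq_factorial_mul_choose]
    push_cast; ring
  have h3 : ∏ j ∈ Finset.range k, (1 - (j : ℝ) / (m : ℝ))
      = (∏ j ∈ Finset.range k, ((m : ℝ) - j)) / (m : ℝ) ^ k := by
    have h4 : ∀ j ∈ Finset.range k, (1 - (j : ℝ) / (m : ℝ)) = ((m : ℝ) - j) / (m : ℝ) :=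
      fun j _ => by field_simp
    rw [Finset.prod_congr rfl h4, Finset.prod_div_distrib, Finset.prod_const, Finset.card_range]
  have hkf : (k.factorial : ℝ) ≠ 0 := Nat.cast_ne_zero.mpr k.factorial_ne_zero
  have hmk : (m : ℝ) ^ k ≠ 0 := pow_ne_zero _ hm0
  rw [h3, ← hcast]
  field_simp

lemma choose_div_powN (N k : ℕ) (hk : k ≤ N) :
    Tendsto (fun m : ℕ => (m.choose k : ℝ) / (m : ℝ) ^ N) atTop
      (nhds (if k = N then 1 / (N.factorial : ℝ) else 0)) := by
  rcases eq_or_lt_of_le hk with rfl | hlt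
  · simpa using choose_div_pow_tendsto k
  · simp only [if_neg (Nat.ne_of_lt hlt)]
    have h1 : Tendsto (fun m : ℕ => ((m.choose k : ℝ) / (m : ℝ) ^ k) * (1 / (m : ℝ) ^ (N - k)))
        atTop (nhds ((1 / (k.factorial : ℝ)) * 0)) := by
      refine (choose_div_pow_tendsto k).mul ?_
      have h2 : Tendsto (fun m : ℕ => (m : ℝ) ^ (N - k)) atTop atTop :=
        Tendsto.comp (tendsto_pow_atTop (by omega)) tendsto_natCast_atTop_atTop
      exact h2.inv_tendsto_atTop.congr fun m => by simp [one_div]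
    rw [mul_zero] at h1
    refine Tendsto.congr' ?_ h1
    filter_upwards [eventually_ge_atTop 1] with m hm
    have hm0 : (m : ℝ) ≠ 0 := Nat.cast_ne_zero.mpr (by omega)
    rw [div_mul_div_comm, mul_one, ← pow_add]
    congr 2
    omega

lemma snat_div_tendsto (N n : ℕ) (hn : n ≤ N) :
    Tendsto (fun m : ℕ => (snat n m : ℝ) / (m : ℝ) ^ N) atTop
      (nhds (if n = N then (2 : ℝ) ^ N / (N.factorial : ℝ) else 0)) := by
  have h1 : ∀ m : ℕ, (snat n m : ℝ) / (m : ℝ) ^ N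
      = ∑ k ∈ Finset.range (n + 1), (n.choose k : ℝ) * 2 ^ k * ((m.choose k : ℝ) / (m : ℝ) ^ N) := by
    intro m
    simp only [snat]
    push_cast
    rw [Finset.sum_div]
    exact Finset.sum_congr rfl fun k _ => by ring
  simp only [h1]
  have h2 : Tendsto (fun m : ℕ => ∑ k ∈ Finset.range (n + 1),
      (n.choose k : ℝ) * 2 ^ k * ((m.choose k : ℝ) / (m : ℝ) ^ N)) atTop
      (nhds (∑ k ∈ Finset.range (n + 1),
        (n.choose k : ℝ) * 2 ^ k * (if k = N then 1 / (N.factorial : ℝ) else 0))) := by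
    refine tendsto_finset_sum _ fun k hk => ?_
    have hkN : k ≤ N := le_trans (Nat.lt_succ_iff.mp (Finset.mem_range.mp hk)) hn
    exact (choose_div_powN N k hkN).const_mul _
  convert h2 using 2
  rcases eq_or_lt_of_le hn with rfl | hlt
  · rw [if_pos rfl]
    have h3 : ∀ k ∈ Finset.range (n + 1),
        (n.choose k : ℝ) * 2 ^ k * (if k = n then 1 / (n.factorial : ℝ) else 0)
          = if k = n then (n.choose k : ℝ) * 2 ^ k * (1 / (n.factorial : ℝ)) else 0 :=
      fun k _ => by split <;> simp
    rw [Finset.sum_congr rfl h3, Finset.sum_ite_eq' (Finset.range (n + 1)) n]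
    simp [Nat.choose_self]
    ring
  · rw [if_neg (Nat.ne_of_lt hlt)]
    symm
    refine Finset.sum_eq_zero fun k hk => ?_
    have : k ≠ N := by
      have := Finset.mem_range.mp hk
      omega
    simp [this]

/-- For noisy truncated coefficients with a_N ≠ 0,
|c_m^{(ε,N)}| ~ (√2 |a_N| / (N!)²) (2m)^N as m → ∞. -/
theorem statement8 (N : ℕ) (a : ℕ → ℂ) (haN : a N ≠ 0) :
    Tendsto
      (fun m : ℕ =>
        ‖cNoisy a N m‖ * ((N.factorial : ℝ)) ^ 2 /
          (Real.sqrt 2 * ‖a N‖ * (2 * (m : ℝ)) ^ N))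
      atTop (nhds 1) := by
  set g : ℕ → ℂ := fun m =>
    ∑ n ∈ Finset.range (N + 1), ((-1 : ℂ) ^ n / (n.factorial : ℂ)) * a n * (snat n m : ℂ)
    with hg
  have hrepr : ∀ m, cNoisy a N m = (Real.sqrt 2 : ℂ) * ((-Complex.I) ^ m * g m) := by
    intro m
    unfold cNoisy
    congr 1
    rw [hg, Finset.mul_sum]
    refine Finset.sum_congr rfl fun n _ => ?_
    rw [pollaczek_eq m n]
    ring
  have hnorm : ∀ m, ‖cNoisy a N m‖ = Real.sqrt 2 * ‖g m‖ := by
    intro m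
    rw [hrepr m, norm_mul, norm_mul, norm_pow, norm_neg, Complex.norm_I, one_pow, one_mul]
    congr 1
    rw [Complex.norm_real, Real.norm_eq_abs, _root_.abs_of_nonneg (Real.sqrt_nonneg 2)]
  set L : ℂ := ((-1 : ℂ) ^ N / (N.factorial : ℂ)) * a N *
      (((2 : ℝ) ^ N / (N.factorial : ℝ) : ℝ) : ℂ) with hLdef
  have hL : Tendsto (fun m : ℕ => g m / (m : ℂ) ^ N) atTop (nhds L) := by
    have heq : ∀ m : ℕ, g m / (m : ℂ) ^ N
        = ∑ n ∈ Finset.range (N + 1), ((-1 : ℂ) ^ n / (n.factorial : ℂ)) * a n *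
            (((snat n m : ℝ) / (m : ℝ) ^ N : ℝ) : ℂ) := by
      intro m
      rw [hg, Finset.sum_div]
      refine Finset.sum_congr rfl fun n _ => ?_
      push_cast
      ring
    simp only [heq]
    have h2 : Tendsto (fun m : ℕ => ∑ n ∈ Finset.range (N + 1),
        ((-1 : ℂ) ^ n / (n.factorial : ℂ)) * a n *
          (((snat n m : ℝ) / (m : ℝ) ^ N : ℝ) : ℂ)) atTop
        (nhds (∑ n ∈ Finset.range (N + 1), ((-1 : ℂ) ^ n / (n.factorial : ℂ)) * a n *
          (((if n = N then (2 : ℝ) ^ N / (N.factorial : ℝ) else 0) : ℝ) : ℂ))) := by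
      refine tendsto_finset_sum _ fun n hn => ?_
      have hnN : n ≤ N := Nat.lt_succ_iff.mp (Finset.mem_range.mp hn)
      exact (((Complex.continuous_ofReal).tendsto _).comp (snat_div_tendsto N n hnN)).const_mul _
    convert h2 using 1
    congr 1
    have h3 : ∀ n ∈ Finset.range (N + 1),
        ((-1 : ℂ) ^ n / (n.factorial : ℂ)) * a n *
          (((if n = N then (2 : ℝ) ^ N / (N.factorial : ℝ) else 0) : ℝ) : ℂ)
        = if n = N then L else 0 := by
      intro n _
      by_cases h : n = N
      · subst h; simp [hLdef]
      · simp [h]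
    rw [Finset.sum_congr rfl h3, Finset.sum_ite_eq' (Finset.range (N + 1)) N fun _ => L]
    simp

  have hLnorm : ‖L‖ = ‖a N‖ * 2 ^ N / ((N.factorial : ℝ)) ^ 2 := by
    have hf : (0:ℝ) < (N.factorial : ℝ) := by positivity
    rw [hLdef]
    rw [norm_mul, norm_mul, norm_div, norm_pow, norm_neg, norm_one, one_pow,
      Complex.norm_natCast, Complex.norm_real, Real.norm_eq_abs,
      _root_.abs_of_nonneg (by positivity)]
    field_simp
  have hK : Tendsto (fun m : ℕ => ‖g m / (m : ℂ) ^ N‖ *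
      ((N.factorial : ℝ) ^ 2 / (‖a N‖ * 2 ^ N))) atTop
      (nhds (‖L‖ * ((N.factorial : ℝ) ^ 2 / (‖a N‖ * 2 ^ N)))) :=
    hL.norm.mul_const _
  have haN' : ‖a N‖ ≠ 0 := norm_ne_zero_iff.mpr haN
  have hone : ‖L‖ * ((N.factorial : ℝ) ^ 2 / (‖a N‖ * 2 ^ N)) = 1 := by
    rw [hLnorm]
    have hf : ((N.factorial : ℝ)) ≠ 0 := by positivity
    have h2N : (‖a N‖ * (2:ℝ) ^ N) ≠ 0 := mul_ne_zero haN' (by positivity)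
    field_simp
  rw [hone] at hK
  refine Tendsto.congr' ?_ hK
  filter_upwards [eventually_ge_atTop 1] with m hm
  have hm0 : (0:ℝ) < (m : ℝ) := by exact_mod_cast hm
  have hmC : ‖g m / (m : ℂ) ^ N‖ = ‖g m‖ / (m : ℝ) ^ N := by
    rw [norm_div, norm_pow, Complex.norm_natCast]
  rw [hmC, hnorm m]
  have hs2 : (0:ℝ) < Real.sqrt 2 := Real.sqrt_pos.mpr (by norm_num)
  have h2m : (2 * (m : ℝ)) ^ N = 2 ^ N * (m : ℝ) ^ N := mul_pow 2 _ N
  rw [h2m]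
  have hf : ((N.factorial : ℝ)) ≠ 0 := by positivity
  rw [show Real.sqrt 2 * ‖g m‖ * (N.factorial : ℝ) ^ 2
      = Real.sqrt 2 * (‖g m‖ * (N.factorial : ℝ) ^ 2) by ring,
    show Real.sqrt 2 * ‖a N‖ * (2 ^ N * (m : ℝ) ^ N)
      = Real.sqrt 2 * (‖a N‖ * (2 ^ N * (m : ℝ) ^ N)) by ring,
    mul_div_mul_left _ _ (ne_of_gt hs2)]
  field_simp
end

section
/- Under the same hypotheses (coefficients (a_n) satisfying the Hausdorff condition with jump function F ∈ L²(1,+∞), exact coefficients c_m with Σ_{m=0}^∞ |c_m|² = C = ∫_1^∞ |F|² dx, noisy coefficients c_m^{(j)} built from a_n^{(j)} with |a_n^{(j)} − a_n| ≤ ε_j, ε_j → 0, N_j → ∞, a_{N_j}^{(j)} ≠ 0, |c_0^{(j)}|² ≤ C, and truncation index k_0^{(j)} = max{k ∈ ℕ : Σ_{m=0}^{k} |c_m^{(j)}|² ≤ C}), one has lim_{j→∞} Σ_{m=0}^{k_0^{(j)}} |c_m^{(j)} − c_m|² = 0. -/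
open MeasureTheory Filter Finset Complex

/-! ### Auxiliary lemmas -/

theorem summable_aux11 (m : ℕ) : Summable (fun n : ℕ => ((n:ℝ)+2) ^ m / n.factorial) := by
  have hs : Summable (fun n : ℕ => (m.factorial * Real.exp 2) * (Real.exp 1 ^ n / n.factorial)) :=
    (Real.summable_pow_div_factorial _).mul_left _
  refine Summable.of_nonneg_of_le (fun n => by positivity) (fun n => ?_) hs
  have h1 : ((n:ℝ)+2) ^ m / m.factorial ≤ Real.exp ((n:ℝ)+2) := by
    calc ((n:ℝ)+2) ^ m / m.factorial ≤ ∑ i ∈ range (m+1), ((n:ℝ)+2) ^ i / i.factorial :=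
          Finset.single_le_sum (f := fun i => ((n:ℝ)+2) ^ i / i.factorial)
            (fun i _ => by positivity) (self_mem_range_succ m)
      _ ≤ Real.exp _ := Real.sum_le_exp_of_nonneg (by positivity) _
  have h2 : Real.exp ((n:ℝ)+2) = Real.exp 2 * Real.exp 1 ^ n := by
    rw [← Real.exp_nat_mul, ← Real.exp_add]; ring_nf
  have hm : (0:ℝ) < m.factorial := by positivity
  have hn : (0:ℝ) < n.factorial := by positivity
  have h3 : ((n:ℝ)+2) ^ m ≤ m.factorial * Real.exp 2 * Real.exp 1 ^ n := by
    rw [div_le_iff₀ hm] at h1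
    calc ((n:ℝ)+2) ^ m ≤ Real.exp ((n:ℝ)+2) * m.factorial := h1
      _ = m.factorial * Real.exp 2 * Real.exp 1 ^ n := by rw [h2]; ring
  rw [div_le_iff₀ hn]
  calc ((n:ℝ)+2) ^ m ≤ m.factorial * Real.exp 2 * Real.exp 1 ^ n := h3
    _ = ↑m.factorial * Real.exp 2 * (Real.exp 1 ^ n / ↑n.factorial) * ↑n.factorial := by
        field_simp

theorem poll_bound11 : ∀ (m : ℕ) (x : ℂ), ‖pollaczek m x‖ ≤ 2 ^ m * (1 + ‖x‖) ^ m := by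
  intro m
  induction m using Nat.strong_induction_on with
  | _ m ih =>
    match m with
    | 0 => intro x; simp [pollaczek]
    | 1 =>
      intro x
      simp only [pollaczek, pow_one]
      rw [norm_mul]
      simp only [Complex.norm_ofNat]
      nlinarith [norm_nonneg x]
    | (m + 2) =>
      intro x
      have h1 := ih (m+1) (by omega) x
      have h0 := ih m (by omega) x
      have hx := norm_nonneg x
      have hb : (1:ℝ) ≤ 1 + ‖x‖ := by linarith
      rw [show pollaczek (m+2) x
          = (2 * x * pollaczek (m + 1) x - ((m : ℂ) + 1) * pollaczek m x) / ((m : ℂ) + 2) from rfl]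
      rw [norm_div]
      have hden : ‖((m : ℂ) + 2)‖ = (m:ℝ) + 2 := by
        rw [show ((m:ℂ)+2) = ((m+2 : ℕ) : ℂ) by push_cast; ring, Complex.norm_natCast]
        push_cast; ring
      rw [hden]
      rw [div_le_iff₀ (by positivity)]
      have hnum : ‖2 * x * pollaczek (m + 1) x - ((m : ℂ) + 1) * pollaczek m x‖
          ≤ 2 * ‖x‖ * ‖pollaczek (m+1) x‖ + ((m:ℝ) + 1) * ‖pollaczek m x‖ := by
        calc _ ≤ ‖2 * x * pollaczek (m + 1) x‖ + ‖((m : ℂ) + 1) * pollaczek m x‖ :=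
              norm_sub_le _ _
          _ ≤ _ := by
            rw [norm_mul, norm_mul, norm_mul]
            simp only [Complex.norm_ofNat]
            have : ‖((m:ℂ)+1)‖ = (m:ℝ)+1 := by
              rw [show ((m:ℂ)+1) = ((m+1 : ℕ) : ℂ) by push_cast; ring, Complex.norm_natCast]
              push_cast; ring
            rw [this]
      refine hnum.trans ?_
      have e1 : 2 * ‖x‖ * ‖pollaczek (m+1) x‖ ≤ 2^(m+2) * (1+‖x‖)^(m+2) := by
        calc 2 * ‖x‖ * ‖pollaczek (m+1) x‖ ≤ 2 * (1+‖x‖) * (2^(m+1) * (1+‖x‖)^(m+1)) := by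
              apply mul_le_mul (by linarith) h1 (norm_nonneg _) (by positivity)
          _ = 2^(m+2) * (1+‖x‖)^(m+2) := by ring
      have e0 : ((m:ℝ)+1) * ‖pollaczek m x‖ ≤ ((m:ℝ)+1) * (2^(m+2) * (1+‖x‖)^(m+2)) := by
        apply mul_le_mul_of_nonneg_left _ (by positivity)
        refine h0.trans ?_
        exact mul_le_mul (pow_le_pow_right₀ one_le_two (by omega))
          (pow_le_pow_right₀ hb (by omega)) (by positivity) (by positivity)
      calc 2 * ‖x‖ * ‖pollaczek (m+1) x‖ + ((m:ℝ) + 1) * ‖pollaczek m x‖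
          ≤ 2^(m+2) * (1+‖x‖)^(m+2) + ((m:ℝ)+1) * (2^(m+2) * (1+‖x‖)^(m+2)) := add_le_add e1 e0
        _ = 2^(m+2) * (1+‖x‖)^(m+2) * ((m:ℝ)+2) := by ring

theorem norm_a_bound11 (a : ℕ → ℂ) (ha : HausdorffCond a) : ∃ A : ℝ, ∀ n, ‖a n‖ ≤ A := by
  obtain ⟨M, hM, εH, hεH, hHa⟩ := ha
  refine ⟨max 1 M, fun n => ?_⟩
  have h := hHa n
  have hd : fdiff a 0 (n - 0) = a n := by simp [fdiff]
  have hsumnn : ∀ i ∈ Finset.range (n+1),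
      (0:ℝ) ≤ ((n.choose i : ℝ)) ^ ((2:ℝ) + εH) * ‖fdiff a i (n - i)‖ ^ ((2:ℝ) + εH) := by
    intro i _
    exact mul_nonneg (Real.rpow_nonneg (by positivity) _)
      (Real.rpow_nonneg (norm_nonneg _) _)
  have hterm : ‖a n‖ ^ ((2:ℝ) + εH)
      ≤ ∑ i ∈ Finset.range (n+1),
          ((n.choose i : ℝ)) ^ ((2:ℝ) + εH) * ‖fdiff a i (n - i)‖ ^ ((2:ℝ) + εH) := by
    have h0 : ((n.choose 0 : ℝ)) ^ ((2:ℝ) + εH) * ‖fdiff a 0 (n - 0)‖ ^ ((2:ℝ) + εH)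
        = ‖a n‖ ^ ((2:ℝ) + εH) := by
      rw [hd]; simp [Real.one_rpow]
    calc ‖a n‖ ^ ((2:ℝ) + εH)
        = ((n.choose 0 : ℝ)) ^ ((2:ℝ) + εH) * ‖fdiff a 0 (n - 0)‖ ^ ((2:ℝ) + εH) := h0.symm
      _ ≤ _ := Finset.single_le_sum hsumnn (Finset.mem_range.mpr (Nat.succ_pos n))
  have hmul : ∑ i ∈ Finset.range (n+1),
      ((n.choose i : ℝ)) ^ ((2:ℝ) + εH) * ‖fdiff a i (n - i)‖ ^ ((2:ℝ) + εH)
      ≤ ((n:ℝ) + 1) ^ ((1:ℝ) + εH) *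
        ∑ i ∈ Finset.range (n+1),
          ((n.choose i : ℝ)) ^ ((2:ℝ) + εH) * ‖fdiff a i (n - i)‖ ^ ((2:ℝ) + εH) :=
    le_mul_of_one_le_left (Finset.sum_nonneg hsumnn)
      (Real.one_le_rpow (by linarith) (by linarith))
  have hfin : ‖a n‖ ^ ((2:ℝ) + εH) < M := lt_of_le_of_lt (hterm.trans hmul) h
  rcases le_or_gt ‖a n‖ 1 with h1 | h1
  · exact h1.trans (le_max_left _ _)
  · have h2 : ‖a n‖ ≤ ‖a n‖ ^ ((2:ℝ) + εH) := by
      nth_rewrite 1 [← Real.rpow_one ‖a n‖]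
      exact Real.rpow_le_rpow_of_exponent_le h1.le (by linarith)
    exact le_max_of_le_right (h2.trans_lt hfin).le

theorem pointwise_conv11 (a : ℕ → ℂ) (A : ℝ) (hA : ∀ n, ‖a n‖ ≤ A)
    (ε : ℕ → ℝ) (N : ℕ → ℕ) (hεnn : ∀ j, 0 ≤ ε j) (hε0 : Tendsto ε atTop (nhds 0))
    (hN : Tendsto N atTop atTop)
    (a' : ℕ → ℕ → ℂ) (ha' : ∀ j, ∀ n ≤ N j, ‖a' j n - a n‖ ≤ ε j) (m : ℕ) :
    Tendsto (fun j => cNoisy (a' j) (N j) m) atTop (nhds (cCoef a m)) := by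
  have hA0 : 0 ≤ A := (norm_nonneg (a 0)).trans (hA 0)
  set P : ℕ → ℂ := fun n => pollaczek m (-Complex.I * ((n : ℂ) + 1 / 2)) with hPdef
  set t : ℕ → ℂ := fun n => ((-1 : ℂ) ^ n / (n.factorial : ℂ)) * a n * P n with htdef
  set g : ℕ → ℝ := fun n => 2 ^ m * (((n:ℝ)+2) ^ m / n.factorial) with hgdef
  have hg0 : ∀ n, 0 ≤ g n := fun n => by positivity
  have hgsum : Summable g := (summable_aux11 m).mul_left _
  have hPn : ∀ n : ℕ, ‖P n‖ ≤ 2 ^ m * ((n:ℝ)+2) ^ m := by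
    intro n
    have hb := poll_bound11 m (-Complex.I * ((n : ℂ) + 1 / 2))
    have hx : ‖-Complex.I * ((n : ℂ) + 1 / 2)‖ = (n:ℝ) + 1/2 := by
      rw [norm_mul, norm_neg, Complex.norm_I, one_mul,
        show ((n:ℂ) + 1/2) = (((n:ℝ) + 1/2 : ℝ) : ℂ) by push_cast; ring, Complex.norm_real,
        Real.norm_eq_abs]
      exact abs_of_nonneg (by positivity)
    rw [hx] at hb
    refine hb.trans (mul_le_mul_of_nonneg_left
      (pow_le_pow_left₀ (by positivity) (by linarith) m) (by positivity))
  have hcn : ∀ n : ℕ, ‖((-1 : ℂ) ^ n / (n.factorial : ℂ))‖ = 1 / n.factorial := by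
    intro n
    rw [norm_div, norm_pow, norm_neg, norm_one, one_pow, Complex.norm_natCast]
  have hgeq : ∀ n : ℕ, 1 / (n.factorial:ℝ) * (2 ^ m * ((n:ℝ)+2)^m) = g n := by
    intro n
    have h1 : (0:ℝ) < n.factorial := by positivity
    rw [hgdef]; field_simp
  have hterm : ∀ n, ‖t n‖ ≤ A * g n := by
    intro n
    show ‖((-1 : ℂ) ^ n / (n.factorial : ℂ)) * a n * P n‖ ≤ A * g n
    rw [norm_mul, norm_mul, hcn]
    calc 1 / (n.factorial:ℝ) * ‖a n‖ * ‖P n‖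
        ≤ 1 / (n.factorial:ℝ) * A * (2 ^ m * ((n:ℝ)+2)^m) :=
          mul_le_mul (mul_le_mul_of_nonneg_left (hA n) (by positivity)) (hPn n)
            (norm_nonneg _) (by positivity)
      _ = A * g n := by rw [mul_comm (1/(n.factorial:ℝ)) A, mul_assoc, hgeq]
  have hts : Summable t := Summable.of_norm_bounded (hgsum.mul_left A) hterm
  set S : ℂ := ∑' n, t n with hSdef
  have hcc : cCoef a m = (Real.sqrt 2 : ℂ) * S := rfl
  set G : ℝ := ∑' n, g n with hGdef
  set r : ℕ → ℝ := fun j => ‖(∑ n ∈ range (N j + 1), t n) - S‖ with hrdef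
  have key : ∀ j, ‖cNoisy (a' j) (N j) m - cCoef a m‖ ≤ Real.sqrt 2 * (ε j * G + r j) := by
    intro j
    have e : cNoisy (a' j) (N j) m - cCoef a m
        = (Real.sqrt 2 : ℂ) * ((∑ n ∈ range (N j + 1),
            (((-1 : ℂ) ^ n / (n.factorial : ℂ)) * (a' j n - a n) * P n))
          + ((∑ n ∈ range (N j + 1), t n) - S)) := by
      rw [hcc, cNoisy, ← mul_sub]
      congr 1
      have h1 : ∑ n ∈ range (N j + 1), (((-1 : ℂ) ^ n / (n.factorial : ℂ)) * (a' j n - a n) * P n)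
          = (∑ n ∈ range (N j + 1), ((-1 : ℂ) ^ n / (n.factorial : ℂ)) * a' j n *
              pollaczek m (-Complex.I * ((n : ℂ) + 1 / 2)))
            - ∑ n ∈ range (N j + 1), t n := by
        rw [← Finset.sum_sub_distrib]
        refine Finset.sum_congr rfl (fun n _ => ?_)
        simp only [htdef, hPdef]
        ring
      rw [h1]; ring
    rw [e, norm_mul]
    have hs2 : ‖((Real.sqrt 2 : ℝ) : ℂ)‖ = Real.sqrt 2 := by
      rw [Complex.norm_real, Real.norm_eq_abs]
      exact _root_.abs_of_nonneg (Real.sqrt_nonneg 2)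
    rw [hs2]
    refine mul_le_mul_of_nonneg_left ?_ (Real.sqrt_nonneg 2)
    refine (norm_add_le _ _).trans (add_le_add ?_ le_rfl)
    calc ‖∑ n ∈ range (N j + 1), (((-1 : ℂ) ^ n / (n.factorial : ℂ)) * (a' j n - a n) * P n)‖
        ≤ ∑ n ∈ range (N j + 1), ‖((-1 : ℂ) ^ n / (n.factorial : ℂ)) * (a' j n - a n) * P n‖ :=
          norm_sum_le _ _
      _ ≤ ∑ n ∈ range (N j + 1), ε j * g n := by
          refine Finset.sum_le_sum (fun n hn => ?_)
          have hn' : n ≤ N j := by have := Finset.mem_range.mp hn; omega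
          rw [norm_mul, norm_mul, hcn]
          calc 1 / (n.factorial:ℝ) * ‖a' j n - a n‖ * ‖P n‖
              ≤ 1 / (n.factorial:ℝ) * ε j * (2 ^ m * ((n:ℝ)+2)^m) :=
                mul_le_mul (mul_le_mul_of_nonneg_left (ha' j n hn') (by positivity)) (hPn n)
                  (norm_nonneg _) (by have := hεnn j; positivity)
            _ = ε j * g n := by rw [mul_comm (1/(n.factorial:ℝ)) (ε j), mul_assoc, hgeq]
      _ = ε j * ∑ n ∈ range (N j + 1), g n := by rw [Finset.mul_sum]
      _ ≤ ε j * G :=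
          mul_le_mul_of_nonneg_left (Summable.sum_le_tsum _ (fun n _ => hg0 n) hgsum) (hεnn j)
  have hr0 : Tendsto r atTop (nhds 0) := by
    have h1 : Tendsto (fun k => ∑ n ∈ range k, t n) atTop (nhds S) := hts.hasSum.tendsto_sum_nat
    have h2 : Tendsto (fun j => N j + 1) atTop atTop := (tendsto_add_atTop_nat 1).comp hN
    exact tendsto_iff_norm_sub_tendsto_zero.mp (h1.comp h2)
  rw [tendsto_iff_norm_sub_tendsto_zero]
  apply squeeze_zero (fun j => norm_nonneg _) key
  have : Tendsto (fun j => Real.sqrt 2 * (ε j * G + r j)) atTop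
      (nhds (Real.sqrt 2 * (0 * G + 0))) :=
    tendsto_const_nhds.mul ((hε0.mul_const G).add hr0)
  simpa using this


/-- Σ_{m=0}^{k_0^{(j)}} |c_m^{(j)} - c_m|² → 0 as j → ∞. -/
theorem statement11
    (a : ℕ → ℂ) (ha : HausdorffCond a)
    (g : ℂ → ℂ)
    (hg : DifferentiableOn ℂ g {z : ℂ | ¬ (z.im = 0 ∧ 1 ≤ z.re)})
    (hgf : ∀ z : ℂ, ‖z‖ < 1 →
      g z = (1 / (2 * (Real.pi : ℂ))) * ∑' n : ℕ, a n * z ^ n)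
    (F : ℝ → ℂ)
    (hF : MemLp F 2 (volume.restrict (Set.Ioi (1 : ℝ))))
    (hFjump : ∀ᵐ (x : ℝ) ∂(volume.restrict (Set.Ioi (1 : ℝ))),
      ∃ fplus fminus : ℂ,
        Tendsto (fun η : ℝ => g ((x : ℂ) + (η : ℂ) * Complex.I))
          (nhdsWithin 0 (Set.Ioi (0 : ℝ))) (nhds fplus) ∧
        Tendsto (fun η : ℝ => g ((x : ℂ) - (η : ℂ) * Complex.I))
          (nhdsWithin 0 (Set.Ioi (0 : ℝ))) (nhds fminus) ∧
        F x = -Complex.I * (fplus - fminus))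
    (C : ℝ) (hC : C = ∫ x in Set.Ioi (1 : ℝ), ‖F x‖ ^ 2)
    (hParseval : ∑' m : ℕ, ‖cCoef a m‖ ^ 2 = C)
    (ε : ℕ → ℝ) (N : ℕ → ℕ)
    (hε : ∀ j, 0 < ε j) (hε0 : Tendsto ε atTop (nhds 0)) (hN : Tendsto N atTop atTop)
    (a' : ℕ → ℕ → ℂ)
    (ha' : ∀ j, ∀ n ≤ N j, ‖a' j n - a n‖ ≤ ε j)
    (haN' : ∀ j, a' j (N j) ≠ 0)
    (hc0 : ∀ j, ‖cNoisy (a' j) (N j) 0‖ ^ 2 ≤ C)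
    (k0 : ℕ → ℕ)
    (hk0 : ∀ j, k0 j =
      sSup {k : ℕ | ∑ m ∈ Finset.range (k + 1), ‖cNoisy (a' j) (N j) m‖ ^ 2 ≤ C})
    : Tendsto
        (fun j : ℕ => ∑ m ∈ Finset.range (k0 j + 1),
          ‖cNoisy (a' j) (N j) m - cCoef a m‖ ^ 2)
        atTop (nhds 0) := by
  
  classical
  obtain ⟨A, hA⟩ := norm_a_bound11 a ha
  have hpt : ∀ m, Tendsto (fun j => cNoisy (a' j) (N j) m) atTop (nhds (cCoef a m)) :=
    pointwise_conv11 a A hA ε N (fun j => (hε j).le) hε0 hN a' ha'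
  have hptd : ∀ K : ℕ, Tendsto (fun j => ∑ m ∈ Finset.range (K+1),
      ‖cNoisy (a' j) (N j) m - cCoef a m‖ ^ 2) atTop (nhds 0) := by
    intro K
    have h := tendsto_finset_sum (Finset.range (K+1)) (fun m (_ : m ∈ Finset.range (K+1)) => by
      have h1 : Tendsto (fun j => cNoisy (a' j) (N j) m - cCoef a m) atTop (nhds 0) := by
        have h2 := (hpt m).sub_const (cCoef a m)
        rwa [sub_self] at h2
      exact h1.norm.pow 2)
    simpa using h
  have hptS : ∀ K : ℕ, Tendsto (fun j => ∑ m ∈ Finset.range (K+1),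
      ‖cNoisy (a' j) (N j) m‖ ^ 2) atTop (nhds (∑ m ∈ Finset.range (K+1), ‖cCoef a m‖ ^ 2)) :=
    fun K => tendsto_finset_sum _ (fun m _ => (hpt m).norm.pow 2)
  have hk0mem : ∀ j, ∑ m ∈ Finset.range (k0 j + 1), ‖cNoisy (a' j) (N j) m‖ ^ 2 ≤ C := by
    intro j
    have h0 : (0:ℕ) ∈ {k : ℕ | ∑ m ∈ Finset.range (k+1), ‖cNoisy (a' j) (N j) m‖ ^ 2 ≤ C} := by
      simpa [Finset.sum_range_one] using hc0 j
    by_cases hb : BddAbove {k : ℕ | ∑ m ∈ Finset.range (k+1), ‖cNoisy (a' j) (N j) m‖ ^ 2 ≤ C}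
    · have := Nat.sSup_mem ⟨0, h0⟩ hb
      rw [hk0 j]; exact this
    · rw [hk0 j, csSup_of_not_bddAbove hb, csSup_empty]
      simpa using h0
  by_cases hsum : Summable (fun m => ‖cCoef a m‖ ^ 2)
  · have hhs : HasSum (fun m => ‖cCoef a m‖ ^ 2) C := hParseval ▸ hsum.hasSum
    have hple : ∀ K : ℕ, ∑ m ∈ Finset.range K, ‖cCoef a m‖ ^ 2 ≤ C :=
      fun K => sum_le_hasSum _ (fun m _ => by positivity) hhs
    rw [Metric.tendsto_atTop]
    intro δ hδ
    obtain ⟨K, hK⟩ : ∃ K : ℕ, C - ∑ m ∈ Finset.range (K+1), ‖cCoef a m‖ ^ 2 < δ/8 := by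
      have h2 := hhs.tendsto_sum_nat
      rw [Metric.tendsto_atTop] at h2
      obtain ⟨J, hJ⟩ := h2 (δ/8) (by linarith)
      refine ⟨J, ?_⟩
      have := hJ (J+1) (by omega)
      rw [Real.dist_eq] at this
      have := abs_lt.mp this
      linarith [this.1]
    obtain ⟨J1, hJ1⟩ := Metric.tendsto_atTop.mp (hptd K) (δ/8) (by linarith)
    obtain ⟨J2, hJ2⟩ := Metric.tendsto_atTop.mp (hptS K) (δ/8) (by linarith)
    refine ⟨max J1 J2, fun j hj => ?_⟩
    have hE := hJ1 j (le_of_max_le_left hj)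
    have hSj := hJ2 j (le_of_max_le_right hj)
    rw [Real.dist_eq, sub_zero] at hE
    rw [Real.dist_eq] at hSj
    have hEnn : (0:ℝ) ≤ ∑ m ∈ Finset.range (K+1), ‖cNoisy (a' j) (N j) m - cCoef a m‖ ^ 2 :=
      Finset.sum_nonneg (fun m _ => by positivity)
    rw [_root_.abs_of_nonneg hEnn] at hE
    have hSjlb : ∑ m ∈ Finset.range (K+1), ‖cCoef a m‖ ^ 2 - δ/8
        < ∑ m ∈ Finset.range (K+1), ‖cNoisy (a' j) (N j) m‖ ^ 2 := by
      have := abs_lt.mp hSj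
      linarith [this.1]
    rw [Real.dist_eq, sub_zero, _root_.abs_of_nonneg (Finset.sum_nonneg (fun m _ => by positivity))]
    rcases le_or_gt (k0 j) K with hkK | hkK
    · have : ∑ m ∈ Finset.range (k0 j + 1), ‖cNoisy (a' j) (N j) m - cCoef a m‖ ^ 2
          ≤ ∑ m ∈ Finset.range (K+1), ‖cNoisy (a' j) (N j) m - cCoef a m‖ ^ 2 :=
        Finset.sum_le_sum_of_subset_of_nonneg
          (Finset.range_subset_range.mpr (by omega)) (fun m _ _ => by positivity)
      linarith
    · have hsplit : ∀ f : ℕ → ℝ,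
          ∑ m ∈ Finset.range (k0 j + 1), f m
          = ∑ m ∈ Finset.range (K+1), f m + ∑ m ∈ Finset.Ico (K+1) (k0 j + 1), f m :=
        fun f => (Finset.sum_range_add_sum_Ico f (by omega)).symm
      rw [hsplit]
      have hIco : ∑ m ∈ Finset.Ico (K+1) (k0 j + 1), ‖cNoisy (a' j) (N j) m - cCoef a m‖ ^ 2
          ≤ 2 * ∑ m ∈ Finset.Ico (K+1) (k0 j + 1), ‖cNoisy (a' j) (N j) m‖ ^ 2
            + 2 * ∑ m ∈ Finset.Ico (K+1) (k0 j + 1), ‖cCoef a m‖ ^ 2 := by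
        rw [Finset.mul_sum, Finset.mul_sum, ← Finset.sum_add_distrib]
        refine Finset.sum_le_sum (fun m _ => ?_)
        have h1 : ‖cNoisy (a' j) (N j) m - cCoef a m‖
            ≤ ‖cNoisy (a' j) (N j) m‖ + ‖cCoef a m‖ := norm_sub_le _ _
        have h2 : ‖cNoisy (a' j) (N j) m - cCoef a m‖ ^ 2
            ≤ (‖cNoisy (a' j) (N j) m‖ + ‖cCoef a m‖) ^ 2 :=
          pow_le_pow_left₀ (norm_nonneg _) h1 2
        nlinarith [sq_nonneg (‖cNoisy (a' j) (N j) m‖ - ‖cCoef a m‖)]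
      have hIa : ∑ m ∈ Finset.Ico (K+1) (k0 j + 1), ‖cNoisy (a' j) (N j) m‖ ^ 2
          ≤ C - ∑ m ∈ Finset.range (K+1), ‖cNoisy (a' j) (N j) m‖ ^ 2 := by
        have := hk0mem j
        rw [hsplit (fun m => ‖cNoisy (a' j) (N j) m‖ ^ 2)] at this
        linarith
      have hIb : ∑ m ∈ Finset.Ico (K+1) (k0 j + 1), ‖cCoef a m‖ ^ 2
          ≤ C - ∑ m ∈ Finset.range (K+1), ‖cCoef a m‖ ^ 2 := by
        have h1 := hple (k0 j + 1)
        rw [hsplit (fun m => ‖cCoef a m‖ ^ 2)] at h1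
        linarith
      linarith
  · have hC0 : C = 0 := by rw [← hParseval, tsum_eq_zero_of_not_summable hsum]
    by_cases hall : ∀ m, cCoef a m = 0
    · have hz : ∀ j, ∑ m ∈ Finset.range (k0 j + 1),
          ‖cNoisy (a' j) (N j) m - cCoef a m‖ ^ 2 = 0 := by
        intro j
        have h1 := hk0mem j
        rw [hC0] at h1
        have h2 : ∑ m ∈ Finset.range (k0 j + 1), ‖cNoisy (a' j) (N j) m - cCoef a m‖ ^ 2
            = ∑ m ∈ Finset.range (k0 j + 1), ‖cNoisy (a' j) (N j) m‖ ^ 2 := by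
          refine Finset.sum_congr rfl (fun m _ => ?_)
          rw [hall m, sub_zero]
        rw [h2]
        exact le_antisymm h1 (Finset.sum_nonneg (fun m _ => by positivity))
      have heq : (fun j : ℕ => ∑ m ∈ Finset.range (k0 j + 1),
          ‖cNoisy (a' j) (N j) m - cCoef a m‖ ^ 2) = fun _ => (0:ℝ) := funext hz
      rw [heq]
      exact tendsto_const_nhds
    · push_neg at hall
      set m0 := Nat.find hall with hm0def
      have hm0 : cCoef a m0 ≠ 0 := Nat.find_spec hall
      have hmin : ∀ m < m0, cCoef a m = 0 := fun m hm => by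
        by_contra hcon
        exact absurd hm (not_lt.mpr (Nat.find_le hcon))
      have hev : ∀ᶠ j in atTop, ‖cNoisy (a' j) (N j) m0 - cCoef a m0‖ < ‖cCoef a m0‖ := by
        have h1 := tendsto_iff_norm_sub_tendsto_zero.mp (hpt m0)
        exact h1.eventually_lt_const (norm_pos_iff.mpr hm0)
      have hz : ∀ᶠ j in atTop, ∑ m ∈ Finset.range (k0 j + 1),
          ‖cNoisy (a' j) (N j) m - cCoef a m‖ ^ 2 = 0 := by
        refine hev.mono (fun j hj => ?_)
        have h1 := hk0mem j
        rw [hC0] at h1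
        have hne : cNoisy (a' j) (N j) m0 ≠ 0 := by
          intro hzero
          rw [hzero, zero_sub, norm_neg] at hj
          exact lt_irrefl _ hj
        have hk : k0 j < m0 := by
          by_contra hcon
          push_neg at hcon
          have hmem : m0 ∈ Finset.range (k0 j + 1) := Finset.mem_range.mpr (by omega)
          have h2 : ‖cNoisy (a' j) (N j) m0‖ ^ 2
              ≤ ∑ m ∈ Finset.range (k0 j + 1), ‖cNoisy (a' j) (N j) m‖ ^ 2 :=
            Finset.single_le_sum (f := fun m => ‖cNoisy (a' j) (N j) m‖ ^ 2)
              (fun m _ => by positivity) hmem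
          have h3 : ‖cNoisy (a' j) (N j) m0‖ ^ 2 ≤ 0 := h2.trans h1
          have h4 : ‖cNoisy (a' j) (N j) m0‖ = 0 := by
            nlinarith [norm_nonneg (cNoisy (a' j) (N j) m0)]
          exact hne (norm_eq_zero.mp h4)
        have h2 : ∑ m ∈ Finset.range (k0 j + 1), ‖cNoisy (a' j) (N j) m - cCoef a m‖ ^ 2
            = ∑ m ∈ Finset.range (k0 j + 1), ‖cNoisy (a' j) (N j) m‖ ^ 2 := by
          refine Finset.sum_congr rfl (fun m hm => ?_)
          have : m < m0 := by have := Finset.mem_range.mp hm; omega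
          rw [hmin m this, sub_zero]
        rw [h2]
        exact le_antisymm h1 (Finset.sum_nonneg (fun m _ => by positivity))
      exact Tendsto.congr' (hz.mono (fun j hj => hj.symm)) tendsto_const_nhds
end

section
/- For every fixed n ∈ ℕ, the Pollaczek polynomials satisfy the asymptotic relation P_m(−i(n+1/2)) ~ ((−1)^m i^m / n!) (2m)^n as m → ∞; precisely, lim_{m→∞} n! · P_m(−i(n+1/2)) / ((−1)^m i^m (2m)^n) = 1. -/
open MeasureTheory Filter Finset Complex

def RN (n m : ℕ) : ℕ := ∑ j ∈ Finset.range (n+1), n.choose j * 2^j * m.choose j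
def TN (n p : ℕ) : ℕ := ∑ j ∈ Finset.range n, n.choose (j+1) * 2^(j+1) * p.choose j

lemma RN_succ_eq (n p : ℕ) : RN n (p+1) = RN n p + TN n p := by
  unfold RN TN
  rw [Finset.sum_range_succ' (fun j => n.choose j * 2^j * (p+1).choose j) n,
      Finset.sum_range_succ' (fun j => n.choose j * 2^j * p.choose j) n]
  simp only [Nat.choose_succ_succ, Nat.mul_add, Finset.sum_add_distrib, Nat.choose_zero_right]
  ring

lemma nat_id1 (n j : ℕ) (h : j ≤ n) :
    n * n.choose j = (j+1) * n.choose (j+1) + j * n.choose j := by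
  have h1 := Nat.choose_succ_right_eq n j
  rw [mul_comm (j+1) (n.choose (j+1)), h1, mul_comm j (n.choose j), ← Nat.mul_add,
      mul_comm]
  congr 1
  omega

lemma star_nat (n m : ℕ) :
    (m+2) * TN n (m+1) + (m+1) * TN n m = 2 * n * RN n (m+1) := by
  unfold TN RN
  rw [Finset.mul_sum, Finset.mul_sum, Finset.mul_sum]
  have hR : ∀ j ∈ Finset.range (n+1),
      2 * n * (n.choose j * 2^j * (m+1).choose j)
        = 2*((j+1) * n.choose (j+1))*2^j*(m+1).choose j
          + 2*(j * n.choose j)*2^j*(m+1).choose j := by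
    intro j hj
    have hj' : j ≤ n := by simpa using Nat.lt_succ_iff.mp (Finset.mem_range.mp hj)
    calc 2*n*(n.choose j*2^j*(m+1).choose j)
        = 2*(n*n.choose j)*(2^j*(m+1).choose j) := by ring
      _ = 2*((j+1)*n.choose (j+1) + j*n.choose j)*(2^j*(m+1).choose j) := by
          rw [nat_id1 n j hj']
      _ = _ := by ring
  rw [Finset.sum_congr rfl hR, Finset.sum_add_distrib]
  rw [Finset.sum_range_succ (fun j => 2*((j+1) * n.choose (j+1))*2^j*(m+1).choose j) n]
  rw [Finset.sum_range_succ' (fun j => 2*(j * n.choose j)*2^j*(m+1).choose j) n]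
  simp only [Nat.choose_succ_self, Nat.zero_mul, Nat.mul_zero, zero_mul, mul_zero,
    add_zero, zero_add]
  rw [← Finset.sum_add_distrib, ← Finset.sum_add_distrib]
  refine Finset.sum_congr rfl ?_
  intro j hj
  have e1 : (m+2) * (m+1).choose j = (m+2).choose (j+1) * (j+1) :=
    Nat.add_one_mul_choose_eq (m+1) j
  have e2 : (m+1) * m.choose j = (m+1).choose (j+1) * (j+1) :=
    Nat.add_one_mul_choose_eq m j
  have e3 : (m+2).choose (j+1) = (m+1).choose j + (m+1).choose (j+1) :=
    Nat.choose_succ_succ (m+1) j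
  calc (m+2) * (n.choose (j+1) * 2^(j+1) * (m+1).choose j)
        + (m+1) * (n.choose (j+1) * 2^(j+1) * m.choose j)
      = (n.choose (j+1) * 2^(j+1)) * ((m+2) * (m+1).choose j)
        + (n.choose (j+1) * 2^(j+1)) * ((m+1) * m.choose j) := by ring
    _ = (n.choose (j+1) * 2^(j+1)) * (((m+1).choose j + (m+1).choose (j+1)) * (j+1))
        + (n.choose (j+1) * 2^(j+1)) * ((m+1).choose (j+1) * (j+1)) := by
        rw [e1, e2, e3]
    _ = 2*((j+1) * n.choose (j+1))*2^j*(m+1).choose j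
        + 2*((j+1) * n.choose (j+1))*2^(j+1)*(m+1).choose (j+1) := by ring

lemma star_c (n m : ℕ) :
    ((m:ℂ)+2) * (RN n (m+2) : ℂ) = (2*(n:ℂ)+1) * (RN n (m+1):ℂ) + ((m:ℂ)+1) * (RN n m:ℂ) := by
  have h1 : (RN n (m+2) : ℂ) = (RN n (m+1):ℂ) + (TN n (m+1):ℂ) := by
    exact_mod_cast congrArg (Nat.cast : ℕ → ℂ) (RN_succ_eq n (m+1))
  have h2 : (RN n (m+1) : ℂ) = (RN n m:ℂ) + (TN n m:ℂ) := by
    exact_mod_cast congrArg (Nat.cast : ℕ → ℂ) (RN_succ_eq n m)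
  have h3 : ((m:ℂ)+2) * (TN n (m+1):ℂ) + ((m:ℂ)+1) * (TN n m:ℂ)
      = 2*(n:ℂ) * (RN n (m+1):ℂ) := by exact_mod_cast congrArg (Nat.cast : ℕ → ℂ) (star_nat n m)
  linear_combination ((m:ℂ)+2) * h1 + h3 + ((m:ℂ)+1) * h2

lemma inv_tendsto : Tendsto (fun m : ℕ => ((m:ℂ))⁻¹) atTop (nhds 0) := by
  have h : Tendsto (fun m : ℕ => ((m:ℝ))⁻¹) atTop (nhds 0) :=
    tendsto_inv_atTop_zero.comp tendsto_natCast_atTop_atTop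
  have := (Complex.continuous_ofReal.tendsto 0).comp h
  simpa [Function.comp_def] using this

lemma choose_fac_tendsto (j : ℕ) :
    Tendsto (fun m : ℕ => (m.choose j : ℂ) * (j.factorial : ℂ) / (m:ℂ)^j) atTop (nhds 1) := by
  induction j with
  | zero => simpa using tendsto_const_nhds
  | succ j ih =>
    have hfac : Tendsto (fun m : ℕ => ((m:ℂ) - (j:ℂ)) / (m:ℂ)) atTop (nhds 1) := by
      have h1 : Tendsto (fun m : ℕ => 1 - (j:ℂ) * ((m:ℂ))⁻¹) atTop (nhds 1) := by
        have := (inv_tendsto.const_mul (j:ℂ)).const_sub 1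
        simpa using this
      apply h1.congr'
      filter_upwards [eventually_ge_atTop 1] with m hm
      have hm0 : (m:ℂ) ≠ 0 := by
        exact_mod_cast Nat.cast_ne_zero.mpr (by omega)
      field_simp
    have := ih.mul hfac
    rw [mul_one] at this
    apply this.congr'
    filter_upwards [eventually_ge_atTop (j+1)] with m hm
    have hm0 : (m:ℂ) ≠ 0 := by exact_mod_cast Nat.cast_ne_zero.mpr (by omega)
    have hc : (m.choose (j+1) : ℂ) * ((j:ℂ)+1) = ((m:ℂ) - (j:ℂ)) * (m.choose j : ℂ) := by
      have h := Nat.choose_succ_right_eq m j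
      have hsub : ((m - j : ℕ) : ℂ) = (m:ℂ) - (j:ℂ) := by
        push_cast [Nat.cast_sub (by omega : j ≤ m)]; ring
      calc (m.choose (j+1) : ℂ) * ((j:ℂ)+1) = ((m.choose (j+1) * (j+1) : ℕ) : ℂ) := by push_cast; ring
        _ = ((m.choose j * (m - j) : ℕ) : ℂ) := by exact_mod_cast congrArg (fun t : ℕ => (t:ℂ)) h
        _ = ((m:ℂ) - (j:ℂ)) * (m.choose j : ℂ) := by push_cast [Nat.cast_sub (by omega : j ≤ m)]; ring
    have hfacpos : ((j:ℂ)+1) ≠ 0 := Nat.cast_add_one_ne_zero j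
    show (m.choose j : ℂ) * (j.factorial:ℂ) / (m:ℂ)^j * (((m:ℂ) - (j:ℂ)) / (m:ℂ))
        = (m.choose (j+1) : ℂ) * ((j+1).factorial:ℂ) / (m:ℂ)^(j+1)
    rw [Nat.factorial_succ, pow_succ]
    push_cast
    field_simp
    linear_combination (-(j.factorial:ℂ)) * hc

lemma RN_zero (n : ℕ) : RN n 0 = 1 := by
  unfold RN
  rw [Finset.sum_eq_single 0]
  · simp
  · intro j hj hj0
    rcases j with _|j
    · omega
    · simp [Nat.choose_succ_self, Nat.choose_zero_succ]
  · simp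

lemma RN_one (n : ℕ) : RN n 1 = 2*n + 1 := by
  rcases n with _|k
  · simp [RN]
  · unfold RN
    rw [← Finset.sum_subset (s₁ := Finset.range 2) (by intro x hx; simp at hx ⊢; omega)]
    · simp [Finset.sum_range_succ]; ring
    · intro j hj hj2
      have : 2 ≤ j := by simp at hj2 ⊢; omega
      rcases j with _|_|j
      · omega
      · omega
      · simp [Nat.choose_succ_succ]

lemma poll_eq (n : ℕ) (m : ℕ) :
    pollaczek m (-Complex.I * ((n:ℂ) + 1/2)) = (-Complex.I)^m * (RN n m : ℂ) := by
  set x : ℂ := -Complex.I * ((n:ℂ) + 1/2) with hx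
  have key : ∀ m : ℕ, pollaczek m x = (-Complex.I)^m * (RN n m : ℂ) ∧
      pollaczek (m+1) x = (-Complex.I)^(m+1) * (RN n (m+1) : ℂ) := by
    intro m
    induction m with
    | zero =>
      constructor
      · simp [pollaczek, RN_zero]
      · show 2 * x = _
        rw [RN_one, hx]
        push_cast
        ring
    | succ k ih =>
      refine ⟨ih.2, ?_⟩
      show (2 * x * pollaczek (k + 1) x - ((k : ℂ) + 1) * pollaczek k x) / ((k : ℂ) + 2) = _
      rw [ih.1, ih.2]
      have hk2 : ((k:ℂ) + 2) ≠ 0 := by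
        have : (0:ℝ) < (k:ℝ) + 2 := by positivity
        simpa using fun h => by exact_mod_cast absurd (congrArg Complex.re h) (by simp; positivity)
      rw [div_eq_iff hk2]
      have hstar := star_c n k
      have h2x : 2 * x = -Complex.I * (2*(n:ℂ)+1) := by rw [hx]; ring
      rw [h2x]
      have hI : (-Complex.I)^(k+2) = -((-Complex.I)^k) := by
        rw [pow_succ, pow_succ]
        have := Complex.I_mul_I
        linear_combination (-Complex.I)^k * this
      calc -Complex.I * (2*(n:ℂ)+1) * ((-Complex.I)^(k+1) * (RN n (k+1):ℂ))
            - ((k:ℂ)+1) * ((-Complex.I)^k * (RN n k : ℂ))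
          = (-Complex.I)^(k+2) * ((2*(n:ℂ)+1) * (RN n (k+1):ℂ) + ((k:ℂ)+1) * (RN n k:ℂ)) := by
            rw [hI, pow_succ]
            linear_combination ((2*(n:ℂ)+1) * (RN n (k+1):ℂ) * (-Complex.I)^k) * Complex.I_mul_I
        _ = (-Complex.I)^(k+2) * (((k:ℂ)+2) * (RN n (k+2) : ℂ)) := by rw [← hstar]
        _ = (-Complex.I)^(k+2) * (RN n (k+2):ℂ) * ((k:ℂ)+2) := by ring
  exact (key m).1

lemma term_tendsto (n j : ℕ) (hj : j ≤ n) :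
    Tendsto (fun m : ℕ =>
        (n.factorial : ℂ) * (n.choose j : ℂ) * 2^j * (m.choose j : ℂ) / (2*(m:ℂ))^n)
      atTop (nhds (if j = n then 1 else 0)) := by
  set c : ℂ := (n.factorial : ℂ) * (n.choose j : ℂ) * 2^j / ((j.factorial:ℂ) * 2^n) with hc
  have h0 : Tendsto (fun m : ℕ =>
      c * ((m.choose j : ℂ) * (j.factorial : ℂ) / (m:ℂ)^j) * (((m:ℂ))⁻¹)^(n-j))
      atTop (nhds (c * 1 * (0:ℂ)^(n-j))) :=
    ((tendsto_const_nhds.mul (choose_fac_tendsto j)).mul (inv_tendsto.pow (n-j)))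
  have hval : c * 1 * (0:ℂ)^(n-j) = if j = n then 1 else 0 := by
    rcases eq_or_ne j n with h | h
    · subst h
      rw [Nat.sub_self, pow_zero, mul_one, if_pos rfl, mul_one, hc, Nat.choose_self]
      push_cast
      rw [mul_one]
      exact div_self (mul_ne_zero (Nat.cast_ne_zero.mpr j.factorial_ne_zero)
        (pow_ne_zero _ two_ne_zero))
    · have : n - j ≠ 0 := by omega
      simp [zero_pow this, h]
  rw [← hval]
  apply h0.congr'
  filter_upwards [eventually_ge_atTop 1] with m hm
  have hm0 : (m:ℂ) ≠ 0 := Nat.cast_ne_zero.mpr (by omega)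
  have hfj : (j.factorial : ℂ) ≠ 0 := Nat.cast_ne_zero.mpr j.factorial_ne_zero
  have hpow : (m:ℂ)^n = (m:ℂ)^j * (m:ℂ)^(n-j) := by
    rw [← pow_add]; congr 1; omega
  rw [hc, mul_pow]
  field_simp
  rw [hpow]
  have hmi : (m:ℂ)^(n-j) * ((m:ℂ)⁻¹)^(n-j) = 1 := by rw [← mul_pow, mul_inv_cancel₀ hm0, one_pow]
  linear_combination ((n.factorial : ℂ) * (n.choose j : ℂ) * (m.choose j : ℂ) * (m:ℂ)^j) * hmi


/-- Asymptotic behavior of the Pollaczek polynomials: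
P_m(-i(n+1/2)) ~ ((-1)^m i^m / n!) (2m)^n as m → ∞, for each fixed n. -/
theorem statement13 (n : ℕ) :
    Tendsto
      (fun m : ℕ =>
        (n.factorial : ℂ) * pollaczek m (-Complex.I * ((n : ℂ) + 1 / 2)) /
          ((-1 : ℂ) ^ m * Complex.I ^ m * (2 * (m : ℂ)) ^ n))
      atTop (nhds 1) := by
  have heq : ∀ m : ℕ,
      (n.factorial : ℂ) * pollaczek m (-Complex.I * ((n : ℂ) + 1 / 2)) /
          ((-1 : ℂ) ^ m * Complex.I ^ m * (2 * (m : ℂ)) ^ n)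
        = ∑ j ∈ Finset.range (n+1),
            (n.factorial : ℂ) * (n.choose j : ℂ) * 2^j * (m.choose j : ℂ) / (2*(m:ℂ))^n := by
    intro m
    rw [poll_eq n m]
    have hpm : (-1 : ℂ)^m * Complex.I^m = (-Complex.I)^m := by
      rw [← mul_pow]; ring_nf
    rw [hpm]
    have hIk : (-Complex.I)^m ≠ 0 := pow_ne_zero _ (by simpa using Complex.I_ne_zero)
    rw [show (n.factorial : ℂ) * ((-Complex.I)^m * (RN n m : ℂ))
        = (-Complex.I)^m * ((n.factorial : ℂ) * (RN n m : ℂ)) by ring]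
    rw [mul_div_mul_left _ _ hIk]
    unfold RN
    push_cast
    rw [Finset.mul_sum, Finset.sum_div]
    exact Finset.sum_congr rfl fun i _ => by ring
  have h : Tendsto (fun m : ℕ => ∑ j ∈ Finset.range (n+1),
      (n.factorial : ℂ) * (n.choose j : ℂ) * 2^j * (m.choose j : ℂ) / (2*(m:ℂ))^n)
      atTop (nhds (∑ j ∈ Finset.range (n+1), (if j = n then (1:ℂ) else 0))) :=
    tendsto_finset_sum _ fun j hj =>
      term_tendsto n j (Nat.lt_succ_iff.mp (Finset.mem_range.mp hj))
  have hs : (∑ j ∈ Finset.range (n+1), (if j = n then (1:ℂ) else 0)) = 1 := by simp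
  rw [hs] at h
  exact h.congr (fun m => (heq m).symm)
end
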